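/- arXiv:1104.0577 — 2 statements merged into one kernel-verified Lean document; each statement's English description precedes it below -/
import Mathlib

section
/- The uniform 1-variation bound for the hyperviscous heat kernel: for every ε > 0, the function K_ε''(x), where K_ε(x) = Σ_{k∈ℤ} cos(kx)/(1+k²+ε²k⁴), satisfies |K_ε''(x)| ≤ 1 + π²/3 + π·cosh((|x|−π)/ε)/(ε·sinh(π/ε)) for x ∈ [−π, π]. -/
open Real

open Complex

lemma L_int (c d u : ℂ) (h : c^2 - d^2 ≠ 0) (a b : ℝ) :
    ∫ x in a..b, Complex.exp (c*x) * Complex.cosh (u + d*x) =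
      (Complex.exp (c*b) * (c * Complex.cosh (u+d*b) - d * Complex.sinh (u+d*b))
        - Complex.exp (c*a) * (c * Complex.cosh (u+d*a) - d * Complex.sinh (u+d*a))) / (c^2 - d^2) := by
  have key : ∀ x : ℝ, HasDerivAt (fun y : ℝ => Complex.exp (c*y) *
      (c * Complex.cosh (u+d*y) - d * Complex.sinh (u+d*y)) / (c^2 - d^2))
      (Complex.exp (c*x) * Complex.cosh (u + d*x)) x := by
    intro x
    have h1 : HasDerivAt (fun y : ℝ => Complex.exp (c*y)) (c * Complex.exp (c*x)) x := by
      have := (Complex.hasDerivAt_exp (c*x)).comp x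
        ((Complex.ofRealCLM.hasDerivAt.const_mul c))
      simpa [mul_comm, Function.comp_def] using this
    have hl : HasDerivAt (fun y : ℝ => u + d*y) d x := by
      simpa using (Complex.ofRealCLM.hasDerivAt.const_mul d).const_add u
    have h2 : HasDerivAt (fun y : ℝ => Complex.cosh (u+d*y)) (Complex.sinh (u+d*x) * d) x :=
      (Complex.hasDerivAt_cosh (u+d*x)).comp (h := fun y : ℝ => u + d*y) x hl
    have h3 : HasDerivAt (fun y : ℝ => Complex.sinh (u+d*y)) (Complex.cosh (u+d*x) * d) x :=
      (Complex.hasDerivAt_sinh (u+d*x)).comp (h := fun y : ℝ => u + d*y) x hl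
    have h4 := (h1.mul (((h2.const_mul c).sub (h3.const_mul d)))).div_const (c^2-d^2)
    refine h4.congr_deriv ?_
    simp only [Pi.sub_apply]
    field_simp
    ring
  rw [intervalIntegral.integral_eq_sub_of_hasDerivAt (fun x _ => key x) (by apply Continuous.intervalIntegrable; fun_prop)]
  ring

noncomputable def hvF (t : ℝ) : C(AddCircle (2*π), ℂ) :=
  ⟨fun p => ((Real.cosh (t * ‖p - ((π : ℝ) : AddCircle (2*π))‖) : ℝ) : ℂ), by fun_prop⟩

lemma hvF_coe (t : ℝ) {x : ℝ} (hx : x ∈ Set.Icc (-π) π) :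
    hvF t ((x : ℝ) : AddCircle (2*π)) = ((Real.cosh (t * (π - |x|)) : ℝ) : ℂ) := by
  have hπ : (0:ℝ) < π := Real.pi_pos
  have hp : (2*π) ≠ 0 := by positivity
  have habs : |2*π| / 2 = π := by rw [abs_of_pos (show (0:ℝ) < 2*π by positivity)]; ring
  have hsub : ((x : ℝ) : AddCircle (2*π)) - ((π : ℝ) : AddCircle (2*π))
      = ((x - π : ℝ) : AddCircle (2*π)) := (AddCircle.coe_sub _ _ _).symm
  have key : ‖((x - π : ℝ) : AddCircle (2*π))‖ = π - |x| := by
    rcases le_or_gt 0 x with h0 | h0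
    · have h1 : ‖((x - π : ℝ) : AddCircle (2*π))‖ = |x - π| := by
        rw [AddCircle.norm_coe_eq_abs_iff _ hp, habs, abs_sub_comm,
          _root_.abs_of_nonneg (show (0:ℝ) ≤ π - x by linarith [hx.2])]
        linarith [hx.2]
      rw [h1, abs_sub_comm, _root_.abs_of_nonneg (show (0:ℝ) ≤ π - x by linarith [hx.2]),
        _root_.abs_of_nonneg h0]
    · have hper : ((x - π : ℝ) : AddCircle (2*π)) = ((x + π : ℝ) : AddCircle (2*π)) := by
        have := AddCircle.coe_add_period (2*π) (x - π)
        rw [show x - π + 2*π = x + π by ring] at this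
        exact this.symm
      have h1 : ‖((x + π : ℝ) : AddCircle (2*π))‖ = |x + π| := by
        rw [AddCircle.norm_coe_eq_abs_iff _ hp, habs,
          _root_.abs_of_nonneg (show (0:ℝ) ≤ x + π by linarith [hx.1])]
        linarith [hx.1]
      rw [hper, h1, _root_.abs_of_nonneg (show (0:ℝ) ≤ x + π by linarith [hx.1]),
        _root_.abs_of_neg h0]
      ring
  rw [hvF]; simp only [ContinuousMap.coe_mk, hsub, key]

lemma hv_coeff (t : ℝ) (ht : 0 < t) (n : ℤ) :
    haveI : Fact (0 < 2*π) := ⟨by positivity⟩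
    fourierCoeff (⇑(hvF t)) n = ((t * Real.sinh (t*π) / (π * (t^2 + n^2)) : ℝ) : ℂ) := by
  haveI : Fact (0 < 2*π) := ⟨by positivity⟩
  have hπ : (0:ℝ) < π := Real.pi_pos
  set c : ℂ := -(I * n) with hc
  have hcd : c^2 - (t:ℂ)^2 = -(((n:ℝ)^2 + t^2 : ℝ) : ℂ) := by
    push_cast; rw [hc]; ring_nf; rw [Complex.I_sq]; ring
  have hne : c^2 - (t:ℂ)^2 ≠ 0 := by
    rw [hcd, neg_ne_zero, Complex.ofReal_ne_zero]; positivity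
  have hcont : Continuous fun x : ℝ => @fourier (2*π) (-n) (x : AddCircle (2*π)) • hvF t (x : AddCircle (2*π)) := by
    apply Continuous.fun_smul
    · exact (fourier (-n)).continuous.comp (AddCircle.continuous_mk' (2*π))
    · exact (hvF t).continuous.comp (AddCircle.continuous_mk' (2*π))
  have hint : ∀ a b : ℝ, IntervalIntegrable
      (fun x : ℝ => @fourier (2*π) (-n) (x : AddCircle (2*π)) • hvF t (x : AddCircle (2*π)))
      MeasureTheory.volume a b := fun a b => hcont.intervalIntegrable a b
  rw [fourierCoeff_eq_intervalIntegral _ n (-π), show -π + 2*π = π by ring]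
  rw [← intervalIntegral.integral_add_adjacent_intervals (hint (-π) 0) (hint 0 π)]
  have hfour : ∀ x : ℝ, (@fourier (2*π) (-n) (x : AddCircle (2*π)) : ℂ) = Complex.exp (c * x) := by
    intro x
    rw [fourier_coe_apply]
    congr 1
    have h2π : ((2*π : ℝ) : ℂ) ≠ 0 := by rw [Complex.ofReal_ne_zero]; positivity
    rw [div_eq_iff h2π, hc]
    push_cast
    ring
  have hI1 : (∫ x in (-π)..(0:ℝ), @fourier (2*π) (-n) (x : AddCircle (2*π)) • hvF t (x : AddCircle (2*π)))
      = ∫ x in (-π)..(0:ℝ), Complex.exp (c*x) * Complex.cosh ((t*π : ℂ) + (t:ℂ)*x) := by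
    apply intervalIntegral.integral_congr
    intro x hxm
    rw [Set.uIcc_of_le (by linarith : -π ≤ (0:ℝ))] at hxm
    have hx : x ∈ Set.Icc (-π) π := ⟨hxm.1, le_trans hxm.2 (le_of_lt hπ)⟩
    have habs : π - |x| = π + x := by
      rw [abs_of_nonpos hxm.2]; ring
    simp only [smul_eq_mul]
    rw [hfour, hvF_coe t hx, habs]
    congr 1
    rw [Complex.ofReal_cosh]
    congr 1
    push_cast
    ring
  have hI2 : (∫ x in (0:ℝ)..π, @fourier (2*π) (-n) (x : AddCircle (2*π)) • hvF t (x : AddCircle (2*π)))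
      = ∫ x in (0:ℝ)..π, Complex.exp (c*x) * Complex.cosh ((t*π : ℂ) + (-(t:ℂ))*x) := by
    apply intervalIntegral.integral_congr
    intro x hxm
    rw [Set.uIcc_of_le (le_of_lt hπ)] at hxm
    have hx : x ∈ Set.Icc (-π) π := ⟨le_trans (by linarith) hxm.1, hxm.2⟩
    have habs : π - |x| = π - x := by rw [_root_.abs_of_nonneg hxm.1]
    simp only [smul_eq_mul]
    rw [hfour, hvF_coe t hx, habs]
    congr 1
    rw [Complex.ofReal_cosh]
    congr 1
    push_cast
    ring
  have hne2 : c^2 - (-(t:ℂ))^2 ≠ 0 := by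
    rw [show (-(t:ℂ))^2 = (t:ℂ)^2 by ring]; exact hne
  rw [hI1, hI2, L_int c (t:ℂ) ((t:ℂ)*(π:ℂ)) hne (-π) 0,
    L_int c (-(t:ℂ)) ((t:ℂ)*(π:ℂ)) hne2 0 π]
  have hE : Complex.exp (c * ((-π : ℝ):ℂ)) = Complex.exp (c * ((π:ℝ):ℂ)) := by
    have h2 : Complex.exp (((n : ℤ) : ℂ) * (2*π*I)) = 1 := Complex.exp_int_mul_two_pi_mul_I n
    have : Complex.exp (c * ((-π : ℝ):ℂ)) = Complex.exp (c * ((π:ℝ):ℂ)) *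
        Complex.exp (((n : ℤ) : ℂ) * (2*π*I)) := by
      rw [← Complex.exp_add]
      congr 1
      rw [hc]; push_cast; ring
    rw [this, h2, mul_one]
  have h1 : ((t:ℂ)*(π:ℂ) + (t:ℂ)*((-π : ℝ):ℂ)) = 0 := by push_cast; ring
  have h2 : ((t:ℂ)*(π:ℂ) + (-(t:ℂ))*((π:ℝ):ℂ)) = 0 := by push_cast; ring
  have h3 : ((t:ℂ)*(π:ℂ) + (t:ℂ)*((0:ℝ):ℂ)) = (t:ℂ)*(π:ℂ) := by push_cast; ring
  have h4 : ((t:ℂ)*(π:ℂ) + (-(t:ℂ))*((0:ℝ):ℂ)) = (t:ℂ)*(π:ℂ) := by push_cast; ring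
  have h5 : Complex.exp (c * ((0:ℝ):ℂ)) = 1 := by
    rw [show c * ((0:ℝ):ℂ) = 0 by push_cast; ring, Complex.exp_zero]
  have hcosh : Complex.cosh ((t:ℂ)*(π:ℂ)) = ((Real.cosh (t*π) : ℝ):ℂ) := by
    rw [← Complex.ofReal_mul, ← Complex.ofReal_cosh]
  have hsinh : Complex.sinh ((t:ℂ)*(π:ℂ)) = ((Real.sinh (t*π) : ℝ):ℂ) := by
    rw [← Complex.ofReal_mul, ← Complex.ofReal_sinh]
  rw [h1, h2, h3, h4, h5, hE, hcosh, hsinh, Complex.cosh_zero, Complex.sinh_zero,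
    show (-(t:ℂ))^2 = (t:ℂ)^2 by ring, hcd, Complex.real_smul]
  have hd : (((n:ℝ)^2 + t^2 : ℝ) : ℂ) ≠ 0 := by rw [Complex.ofReal_ne_zero]; positivity
  have hdr : ((n:ℝ)^2 + t^2 : ℝ) ≠ 0 := by positivity
  have hπC : ((π:ℝ):ℂ) ≠ 0 := by rw [Complex.ofReal_ne_zero]; positivity
  rw [← add_div, div_neg]
  push_cast at hd hπC ⊢
  have hd' : ((t:ℂ)^2 + (n:ℂ)^2) ≠ 0 := by
    intro hz; apply hd; rw [← hz]; ring
  field_simp [hd, hd', hπC]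
  ring

lemma hz1' : Summable (fun n : ℕ => 1/(((n:ℝ)+1))^2) := by
  have hz : Summable (fun n : ℕ => 1/((n:ℝ))^2) := ⟨_, hasSum_zeta_two⟩
  have := (summable_nat_add_iff (f := fun n : ℕ => 1/((n:ℝ))^2) 1).mpr hz
  simpa using this

lemma key' (t : ℝ) (ht : 0 < t) (g : ℕ → ℝ) (hg : ∀ n : ℕ, g n = 1/(t^2+((n:ℝ)+1)^2)) :
    Summable g := by
  apply Summable.of_nonneg_of_le (fun n => by rw [hg]; positivity) (fun n => ?_) hz1'
  rw [hg]
  apply div_le_div_of_nonneg_left one_pos.le (by positivity)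
  nlinarith [sq_nonneg t]

lemma hv_summable (t : ℝ) (ht : 0 < t) : Summable (fun n : ℤ => 1/(t^2+(n:ℝ)^2)) := by
  have h0 : Summable (fun n : ℕ => 1/(t^2+(((n:ℕ)+1:ℝ))^2)) :=
    key' t ht _ (fun n => rfl)
  have h1 : Summable (fun n : ℕ => 1/(t^2+((n:ℕ):ℝ)^2)) :=
    (summable_nat_add_iff (f := fun n : ℕ => 1/(t^2+((n:ℕ):ℝ)^2)) 1).mp
      (h0.congr (fun n => by push_cast; ring_nf))
  have h2 : Summable (fun n : ℕ => 1/(t^2+(((-(n+1) : ℤ)):ℝ)^2)) :=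
    h0.congr (fun n => by push_cast; ring_nf)
  exact Summable.of_nat_of_neg_add_one
    (h1.congr (fun n => by norm_num)) h2


lemma hv_hasSum (t : ℝ) (ht : 0 < t) {x : ℝ} (hx : x ∈ Set.Icc (-π) π) :
    HasSum (fun k : ℤ => Real.cos (k*x) / (t^2 + (k:ℝ)^2))
      (π * Real.cosh (t*(π - |x|)) / (t * Real.sinh (t*π))) := by
  haveI : Fact (0 < (2:ℝ)*π) := ⟨by positivity⟩
  have hπ : (0:ℝ) < π := Real.pi_pos
  have hS : 0 < Real.sinh (t*π) := Real.sinh_pos_iff.mpr (by positivity)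
  set K : ℝ := t * Real.sinh (t*π) / π with hK
  have hKpos : 0 < K := by positivity
  have hsum : Summable (fourierCoeff (⇑(hvF t))) := by
    rw [funext (hv_coeff t ht)]
    rw [Complex.summable_ofReal]
    have := (hv_summable t ht).mul_left (t * Real.sinh (t*π) / π)
    apply this.congr
    intro n
    field_simp
  have hps := has_pointwise_sum_fourier_series_of_summable hsum ((x : ℝ) : AddCircle (2*π))
  have hre := hps.mapL Complex.reCLM
  have hfour : ∀ m : ℤ, (@fourier (2*π) m ((x:ℝ) : AddCircle (2*π)) : ℂ)
      = Complex.exp ((((m:ℝ)*x : ℝ) : ℂ) * I) := by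
    intro m
    rw [fourier_coe_apply]
    congr 1
    have h2π : ((2*π : ℝ) : ℂ) ≠ 0 := by rw [Complex.ofReal_ne_zero]; positivity
    rw [div_eq_iff h2π]
    push_cast
    ring
  have heq : (fun n : ℤ => Complex.reCLM (fourierCoeff (⇑(hvF t)) n • @fourier (2*π) n ((x:ℝ) : AddCircle (2*π))))
      = fun n : ℤ => K * (Real.cos (n*x) / (t^2 + (n:ℝ)^2)) := by
    funext n
    rw [hv_coeff t ht, hfour n, smul_eq_mul]
    simp only [Complex.reCLM_apply, Complex.mul_re, Complex.ofReal_re, Complex.ofReal_im,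
      Complex.exp_ofReal_mul_I_re, Complex.exp_ofReal_mul_I_im, zero_mul, sub_zero]
    rw [hK]
    field_simp
  rw [heq] at hre
  have hfx : Complex.reCLM (hvF t ((x:ℝ) : AddCircle (2*π))) = Real.cosh (t * (π - |x|)) := by
    rw [hvF_coe t hx, Complex.reCLM_apply, Complex.ofReal_re]
  rw [hfx] at hre
  have := hre.div_const K
  have hfin : (fun n : ℤ => K * (Real.cos (n*x) / (t^2 + (n:ℝ)^2)) / K)
      = fun n : ℤ => Real.cos (n*x) / (t^2 + (n:ℝ)^2) := by
    funext n
    rw [mul_div_cancel_left₀ _ (ne_of_gt hKpos)]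
  rw [hfin] at this
  convert this using 1 <;> try rfl
  rw [hK]
  field_simp

set_option maxHeartbeats 1000000 in
lemma hv_hasSum_hh : HasSum (fun k : ℤ => if k = 0 then (1:ℝ) else 1/(k:ℝ)^2) (1 + π^2/3) := by
  have hz : HasSum (fun n : ℕ => 1/((n:ℝ))^2) (π^2/6) := hasSum_zeta_two
  have hnat : HasSum (fun n : ℕ => if ((n:ℤ) : ℤ) = 0 then (1:ℝ) else 1/(((n:ℤ)):ℝ)^2) (1 + π^2/6) := by
    have hupd := hz.update 0 1
    have heq : Function.update (fun n : ℕ => 1/((n:ℝ))^2) 0 1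
        = fun n : ℕ => if ((n:ℤ) : ℤ) = 0 then (1:ℝ) else 1/(((n:ℤ)):ℝ)^2 := by
      funext n
      cases n with
      | zero => simp
      | succ m =>
        rw [Function.update_of_ne (by omega)]
        have h0 : ((m+1 : ℕ) : ℤ) ≠ 0 := by omega
        simp only [h0, if_false]
        push_cast
        ring
    rw [heq] at hupd
    convert hupd using 1 <;> try rfl
    norm_num
  have hshift : HasSum (fun n : ℕ => 1/(((n:ℝ)+1))^2) (π^2/6) := by
    have h6 : HasSum (fun n : ℕ => 1/((n:ℝ))^2)
        (π^2/6 + ∑ i ∈ Finset.range 1, 1/((i:ℝ))^2) := by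
      simpa using hz
    have := (hasSum_nat_add_iff (f := fun n : ℕ => 1/((n:ℝ))^2) 1).mpr h6
    simpa using this
  have hneg : HasSum (fun n : ℕ => if (-((n:ℤ)+1) : ℤ) = 0 then (1:ℝ) else 1/(((-((n:ℤ)+1) : ℤ)):ℝ)^2)
      (π^2/6) := by
    have heq : (fun n : ℕ => if (-((n:ℤ)+1) : ℤ) = 0 then (1:ℝ) else 1/(((-((n:ℤ)+1) : ℤ)):ℝ)^2)
        = fun n : ℕ => 1/(((n:ℝ)+1))^2 := by
      funext n
      have h0 : (-((n:ℤ)+1) : ℤ) ≠ 0 := by omega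
      simp only [h0, if_false]
      push_cast
      ring
    rw [heq]
    exact hshift
  have := HasSum.of_nat_of_neg_add_one (f := fun k : ℤ => if k = 0 then (1:ℝ) else 1/(k:ℝ)^2) hnat hneg
  convert this using 1
  ring

/-- uniform bound on the second derivative of the hyperviscous heat kernel
`K_ε(x) = Σ_{k∈ℤ} cos(kx)/(1+k²+ε²k⁴)`, whose second derivative is
`K_ε''(x) = -Σ_{k∈ℤ} k² cos(kx)/(1+k²+ε²k⁴)`. -/
theorem hyperviscous_kernel_second_derivative_bound (ε : ℝ) (hε : 0 < ε)
    (x : ℝ) (hx : x ∈ Set.Icc (-π) π) :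
    |∑' k : ℤ, ((k : ℝ) ^ 2 * Real.cos (k * x)) / (1 + (k : ℝ) ^ 2 + ε ^ 2 * (k : ℝ) ^ 4)| ≤
      1 + π ^ 2 / 3 + π * Real.cosh ((|x| - π) / ε) / (ε * Real.sinh (π / ε)) := by
  have hπ : (0:ℝ) < π := Real.pi_pos
  set t : ℝ := 1/ε with htdef
  have ht : 0 < t := by positivity
  set F : ℝ := π * Real.cosh ((|x| - π) / ε) / (ε * Real.sinh (π / ε)) with hF
  have hsinh : 0 < Real.sinh (π / ε) := Real.sinh_pos_iff.mpr (by positivity)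
  have hFpos : 0 ≤ F := by
    rw [hF]
    have := Real.cosh_pos ((|x| - π) / ε)
    positivity
  -- the main Fourier series
  set a : ℤ → ℝ := fun k => Real.cos (k*x) / (1 + ε^2 * (k:ℝ)^2) with ha
  have hA : HasSum a F := by
    have h0 := (hv_hasSum t ht hx).mul_left (1/ε^2)
    have heq : (fun k : ℤ => (1/ε^2) * (Real.cos (k*x) / (t^2 + (k:ℝ)^2))) = a := by
      funext k
      have hden : t^2 + (k:ℝ)^2 ≠ 0 := by positivity
      have h2 : ε^2 * (t^2 + (k:ℝ)^2) = 1 + ε^2*(k:ℝ)^2 := by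
        rw [htdef]; field_simp
      show 1 / ε ^ 2 * (Real.cos (↑k * x) / (t ^ 2 + ↑k ^ 2)) = Real.cos (↑k * x) / (1 + ε ^ 2 * ↑k ^ 2)
      rw [← h2]
      field_simp
    have hval : (1/ε^2) * (π * Real.cosh (t*(π - |x|)) / (t * Real.sinh (t*π))) = F := by
      rw [hF, htdef]
      have hc : Real.cosh ((|x| - π) / ε) = Real.cosh ((π - |x|) * (1/ε)) := by
        rw [show (|x| - π) / ε = -((π - |x|) * (1/ε)) by ring, Real.cosh_neg]
      have hs : Real.sinh (π / ε) = Real.sinh ((1/ε) * π) := by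
        rw [show π / ε = (1/ε) * π by ring]
      rw [hc, hs]
      field_simp
    rw [heq, hval] at h0
    exact h0
  -- the remainder
  set term : ℤ → ℝ := fun k => ((k : ℝ) ^ 2 * Real.cos (k * x)) / (1 + (k : ℝ) ^ 2 + ε ^ 2 * (k : ℝ) ^ 4)
    with hterm
  set g : ℤ → ℝ := fun k => a k - term k with hg
  set hh : ℤ → ℝ := fun k => if k = 0 then (1:ℝ) else 1/(k:ℝ)^2 with hhh
  have hgbound : ∀ k : ℤ, |g k| ≤ hh k := by
    intro k
    rcases eq_or_ne k 0 with rfl | hk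
    · simp [hg, ha, hterm, hhh]
    · have hk2 : (0:ℝ) < (k:ℝ)^2 := by positivity
      have hd1 : (0:ℝ) < 1 + ε^2 * (k:ℝ)^2 := by positivity
      have hd2 : (0:ℝ) < 1 + (k:ℝ)^2 + ε^2 * (k:ℝ)^4 := by positivity
      have hgk : g k = Real.cos (k*x) * (1 / ((1 + ε^2 * (k:ℝ)^2) * (1 + (k:ℝ)^2 + ε^2 * (k:ℝ)^4))) := by
        rw [hg, ha, hterm]
        field_simp
        ring
      rw [hgk, hhh]
      simp only [hk, if_false]
      rw [abs_mul]
      have h1 : |Real.cos (k*x)| ≤ 1 := Real.abs_cos_le_one _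
      have h2 : |1 / ((1 + ε^2 * (k:ℝ)^2) * (1 + (k:ℝ)^2 + ε^2 * (k:ℝ)^4))| ≤ 1/(k:ℝ)^2 := by
        rw [abs_of_pos (by positivity)]
        apply div_le_div_of_nonneg_left one_pos.le hk2
        nlinarith [sq_nonneg ((k:ℝ)^2), sq_nonneg (ε * (k:ℝ)^2), sq_nonneg (ε * (k:ℝ))]
      calc |Real.cos (k*x)| * |1 / ((1 + ε^2 * (k:ℝ)^2) * (1 + (k:ℝ)^2 + ε^2 * (k:ℝ)^4))|
          ≤ 1 * (1/(k:ℝ)^2) := by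
            apply mul_le_mul h1 h2 (abs_nonneg _) zero_le_one
        _ = 1/(k:ℝ)^2 := one_mul _
  have hhsummable : Summable hh := hv_hasSum_hh.summable
  have hgabs : Summable (fun k => |g k|) :=
    Summable.of_nonneg_of_le (fun k => abs_nonneg _) hgbound hhsummable
  have hgsummable : Summable g := hgabs.of_abs
  set G : ℝ := ∑' k, g k with hG
  have hGsum : HasSum g G := hgsummable.hasSum
  have hGbound : |G| ≤ 1 + π^2/3 := by
    have hnorm := norm_tsum_le_tsum_norm (f := g) (by simpa [Real.norm_eq_abs] using hgabs)
    simp only [Real.norm_eq_abs] at hnorm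
    calc |G| ≤ ∑' k, |g k| := hnorm
      _ ≤ ∑' k, hh k := Summable.tsum_le_tsum hgbound hgabs hhsummable
      _ = 1 + π^2/3 := hv_hasSum_hh.tsum_eq
  have hTermSum : HasSum term (F - G) := by
    have := hA.sub hGsum
    have heq : (fun k => a k - g k) = term := by
      funext k
      rw [hg]
      ring
    rwa [heq] at this
  rw [hTermSum.tsum_eq]
  have habs : |F - G| ≤ |F| + |G| := by
    rw [sub_eq_add_neg]
    exact (abs_add_le F (-G)).trans (by rw [abs_neg])
  rw [_root_.abs_of_nonneg hFpos] at habs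
  linarith
end

section
/- For every ε > 0 and x ∈ [−π, π], the Fourier series identity Σ_{k∈ℤ} cos(kx)/(1+ε²k²) = π·cosh((|x|−π)/ε)/(ε·sinh(π/ε)) holds. -/
open Real

lemma hasDerivAt_aux (a b c : ℂ) (x : ℝ) :
    HasDerivAt (fun x : ℝ => Complex.exp (c * x) *
        (a * Complex.sinh (a * (x + b)) - c * Complex.cosh (a * (x + b))))
      ((a ^ 2 - c ^ 2) * (Complex.exp (c * x) * Complex.cosh (a * (x + b)))) x := by
  have H : ∀ z : ℂ, HasDerivAt (fun z : ℂ => Complex.exp (c * z) *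
        (a * Complex.sinh (a * (z + b)) - c * Complex.cosh (a * (z + b))))
      ((a ^ 2 - c ^ 2) * (Complex.exp (c * z) * Complex.cosh (a * (z + b)))) z := by
    intro z
    have hc : HasDerivAt (fun z : ℂ => c * z) c z := by
      simpa using (hasDerivAt_id z).const_mul c
    have hz : HasDerivAt (fun z : ℂ => a * (z + b)) a z := by
      simpa using ((hasDerivAt_id z).add_const b).const_mul a
    have h2 := ((hz.csinh).const_mul a).sub ((hz.ccosh).const_mul c)
    have := hc.cexp.mul h2
    convert this using 1 <;> first | rfl | (simp only [Pi.sub_apply]; ring)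
  exact (H x).comp_ofReal

lemma integral_aux (a b c : ℂ) (hac : a ^ 2 - c ^ 2 ≠ 0) (x₁ x₂ : ℝ) :
    (∫ x in x₁..x₂, Complex.exp (c * x) * Complex.cosh (a * (x + b))) =
      (Complex.exp (c * x₂) * (a * Complex.sinh (a * (x₂ + b)) - c * Complex.cosh (a * (x₂ + b)))
      - Complex.exp (c * x₁) * (a * Complex.sinh (a * (x₁ + b)) - c * Complex.cosh (a * (x₁ + b))))
      / (a ^ 2 - c ^ 2) := by
  rw [eq_div_iff hac]
  have := intervalIntegral.integral_eq_sub_of_hasDerivAt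
    (f := fun x : ℝ => Complex.exp (c * x) *
        (a * Complex.sinh (a * (x + b)) - c * Complex.cosh (a * (x + b))))
    (f' := fun x : ℝ => (a ^ 2 - c ^ 2) * (Complex.exp (c * x) * Complex.cosh (a * (x + b))))
    (fun x _ => hasDerivAt_aux a b c x)
    (Continuous.intervalIntegrable (by fun_prop) x₁ x₂)
  rw [intervalIntegral.integral_const_mul] at this
  rw [mul_comm, ← this]

lemma key_integral (ε : ℝ) (hε : 0 < ε) (n : ℤ) :
    (∫ x in (-π)..π, Complex.exp ((-n) * Complex.I * x) * ((Real.cosh ((|x| - π)/ε) : ℝ) : ℂ))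
      = (2 * ε * Real.sinh (π/ε) : ℝ) / ((1 + ε^2 * n^2 : ℝ) : ℂ) := by
  set a : ℂ := ((ε⁻¹ : ℝ) : ℂ) with ha
  set c : ℂ := (-n) * Complex.I with hc
  have hεc : (ε : ℂ) ≠ 0 := by exact_mod_cast hε.ne'
  have hsq : a ^ 2 - c ^ 2 = ((ε⁻¹ ^ 2 + n ^ 2 : ℝ) : ℂ) := by
    push_cast [ha, hc]
    rw [mul_pow, Complex.I_sq]
    ring
  have hac : a ^ 2 - c ^ 2 ≠ 0 := by
    rw [hsq]
    exact_mod_cast (by positivity : (0:ℝ) < ε⁻¹ ^ 2 + n ^ 2).ne'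
  have int1 : IntervalIntegrable
      (fun x : ℝ => Complex.exp ((-n) * Complex.I * x) * ((Real.cosh ((|x| - π)/ε) : ℝ) : ℂ))
      MeasureTheory.volume (-π) 0 := by
    apply Continuous.intervalIntegrable
    fun_prop
  have int2 : IntervalIntegrable
      (fun x : ℝ => Complex.exp ((-n) * Complex.I * x) * ((Real.cosh ((|x| - π)/ε) : ℝ) : ℂ))
      MeasureTheory.volume 0 π := by
    apply Continuous.intervalIntegrable
    fun_prop
  rw [← intervalIntegral.integral_add_adjacent_intervals int1 int2]
  have e1 : (∫ x in (-π)..(0:ℝ), Complex.exp ((-n) * Complex.I * x) * ((Real.cosh ((|x| - π)/ε) : ℝ) : ℂ))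
      = ∫ x in (-π)..(0:ℝ), Complex.exp (c * x) * Complex.cosh (a * (x + (π:ℂ))) := by
    refine intervalIntegral.integral_congr fun x hx => ?_
    rw [Set.uIcc_of_le (by linarith [Real.pi_pos] : -π ≤ (0:ℝ))] at hx
    have hx0 : x ≤ 0 := hx.2
    rw [abs_of_nonpos hx0]
    have : (-x - π)/ε = -((x + π)/ε) := by ring
    rw [this, Real.cosh_neg]
    rw [Complex.ofReal_cosh,
      show (((x + π)/ε : ℝ) : ℂ) = a * ((x:ℂ) + (π:ℂ)) by push_cast [ha]; field_simp,
      show ((-n : ℂ)) * Complex.I * (x:ℂ) = c * (x:ℂ) by rw [hc]]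
  have e2 : (∫ x in (0:ℝ)..π, Complex.exp ((-n) * Complex.I * x) * ((Real.cosh ((|x| - π)/ε) : ℝ) : ℂ))
      = ∫ x in (0:ℝ)..π, Complex.exp (c * x) * Complex.cosh (a * (x + (-π:ℂ))) := by
    refine intervalIntegral.integral_congr fun x hx => ?_
    rw [Set.uIcc_of_le (by positivity : (0:ℝ) ≤ π)] at hx
    rw [abs_of_nonneg hx.1]
    rw [show (x - π)/ε = (x + -π)/ε by ring, Complex.ofReal_cosh,
      show (((x + -π)/ε : ℝ) : ℂ) = a * ((x:ℂ) + (-π:ℂ)) by push_cast [ha]; field_simp,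
      show ((-n : ℂ)) * Complex.I * (x:ℂ) = c * (x:ℂ) by rw [hc]]
  rw [e1, e2, integral_aux a (π:ℂ) c hac, integral_aux a (-π:ℂ) c hac]
  -- evaluate
  have hK1 : Complex.exp (c * ((-π : ℝ) : ℂ)) = ((Real.cos (n * π) : ℝ) : ℂ) := by
    rw [show c * ((-π : ℝ) : ℂ) = ((n * π : ℝ) : ℂ) * Complex.I by rw [hc]; push_cast; ring,
      Complex.exp_mul_I, ← Complex.ofReal_cos, ← Complex.ofReal_sin, Real.sin_int_mul_pi]
    simp
  have hK2 : Complex.exp (c * ((π : ℝ) : ℂ)) = ((Real.cos (n * π) : ℝ) : ℂ) := by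
    rw [show c * ((π : ℝ) : ℂ) = ((-(n * π) : ℝ) : ℂ) * Complex.I by rw [hc]; push_cast; ring,
      Complex.exp_mul_I, ← Complex.ofReal_cos, ← Complex.ofReal_sin, Real.cos_neg, Real.sin_neg,
      Real.sin_int_mul_pi]
    push_cast
    ring
  have hz1 : ((-π : ℝ) : ℂ) + (π : ℂ) = 0 := by push_cast; ring
  have hz2 : ((π : ℝ) : ℂ) + (-π : ℂ) = 0 := by push_cast; ring
  have hS : a * (((0:ℝ) : ℂ) + (π:ℂ)) = ((π/ε : ℝ) : ℂ) := by
    push_cast [ha]; field_simp; simp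
  have hS2 : a * (((0:ℝ) : ℂ) + (-π:ℂ)) = -((π/ε : ℝ) : ℂ) := by
    push_cast [ha]; field_simp; simp
  rw [hz1, hz2, hS, hS2, hK1, hK2]
  simp only [mul_zero, Complex.sinh_zero, Complex.cosh_zero, Complex.ofReal_zero,
    Complex.exp_zero, Complex.sinh_neg, Complex.cosh_neg, mul_one, mul_zero]
  rw [hsq, ← Complex.ofReal_sinh, ← Complex.ofReal_cosh]
  rw [← add_div, div_eq_div_iff (by exact_mod_cast (by positivity : (0:ℝ) < ε⁻¹^2 + n^2).ne')
    (by exact_mod_cast (by positivity : (0:ℝ) < 1 + ε^2 * n^2).ne')]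
  push_cast [ha]
  field_simp
  ring


noncomputable def gfun (ε : ℝ) : ℝ → ℂ := fun x => ((Real.cosh ((|x| - π)/ε) : ℝ) : ℂ)

lemma gfun_cont (ε : ℝ) : Continuous (gfun ε) := by
  unfold gfun
  fun_prop

lemma summable_coeffs (ε : ℝ) (hε : 0 < ε) (C : ℝ) :
    Summable (fun n : ℤ => C / (1 + ε^2 * (n:ℝ)^2)) := by
  have hee : ε⁻¹ * ε = 1 := inv_mul_cancel₀ hε.ne'
  have base : Summable (fun n : ℕ => 1 / (1 + ε^2 * (n:ℝ)^2)) := by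
    have hsum : Summable (fun n : ℕ => (1 + ε⁻¹^2) / ((n:ℝ)+1)^2) := by
      simp_rw [div_eq_mul_inv]
      apply Summable.mul_left
      have := (summable_nat_add_iff (f := fun n : ℕ => ((n:ℝ)^2)⁻¹) 1).mpr
        (by simpa [one_div] using Real.summable_one_div_nat_pow.mpr one_lt_two)
      simpa using this
    refine Summable.of_nonneg_of_le (fun n => by positivity) (fun n => ?_) hsum
    rw [div_le_div_iff₀ (by positivity) (by positivity)]
    have hee2 : ε⁻¹^2 * ε^2 = 1 := by rw [← mul_pow, hee]; norm_num
    nlinarith [sq_nonneg (ε*(n:ℝ) - ε⁻¹), hee, hee2, sq_nonneg ((n:ℝ))]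
  have hint : Summable (fun n : ℤ => 1 / (1 + ε^2 * (n:ℝ)^2)) := by
    refine Summable.of_nat_of_neg ?_ ?_ <;>
      · apply base.congr
        intro n
        push_cast
        ring_nf
  simpa [div_eq_mul_one_div C] using hint.mul_left C




lemma coeff_eq (ε : ℝ) (hε : 0 < ε) (n : ℤ) :
    haveI : Fact (0 < 2*π) := ⟨by positivity⟩
    fourierCoeff (AddCircle.liftIco (2*π) (-π) (gfun ε)) n =
      ((ε * Real.sinh (π/ε) / (π * (1 + ε^2*(n:ℝ)^2)) : ℝ) : ℂ) := by
  haveI : Fact (0 < 2*π) := ⟨by positivity⟩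
  rw [fourierCoeff_liftIco_eq, fourierCoeffOn_eq_integral]
  have hb : -π + 2*π = π := by ring
  rw [hb]
  simp only [fourier_coe_apply]
  have hcong : (∫ x in (-π)..π, Complex.exp (2 * ↑π * Complex.I * ↑(-n) * ↑x / ((π - -π : ℝ) : ℂ)) • gfun ε x)
      = ∫ x in (-π)..π, Complex.exp ((-n : ℂ) * Complex.I * ↑x) * ((Real.cosh ((|x| - π)/ε) : ℝ) : ℂ) := by
    refine intervalIntegral.integral_congr fun x _ => ?_
    rw [smul_eq_mul]
    congr 2
    have hπ : (π : ℂ) ≠ 0 := by exact_mod_cast Real.pi_ne_zero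
    push_cast
    have h2π : ((π:ℂ) - -(π:ℂ)) ≠ 0 := by intro h; apply hπ; linear_combination h / 2
    rw [div_eq_iff h2π]
    ring
  rw [hcong, key_integral ε hε n, Complex.real_smul]
  have hπc : (π:ℂ) ≠ 0 := by exact_mod_cast Real.pi_ne_zero
  have hdc : (1:ℂ) + (ε:ℂ)^2*(n:ℂ)^2 ≠ 0 := by
    have h0 : ((1 + ε^2*(n:ℝ)^2 : ℝ):ℂ) ≠ 0 := by
      exact_mod_cast (by positivity : (0:ℝ) < 1 + ε^2*(n:ℝ)^2).ne'
    push_cast at h0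
    exact h0
  push_cast
  rw [div_mul_div_comm, one_mul]
  rw [div_eq_div_iff (mul_ne_zero (by intro h; apply hπc; linear_combination h/2) hdc)
    (mul_ne_zero hπc hdc)]
  ring



/-- the Fourier series identity
`Σ_{k∈ℤ} cos(kx)/(1+ε²k²) = π cosh((|x|-π)/ε)/(ε sinh(π/ε))` on `[-π,π]`. -/
theorem fourier_series_cosh_identity (ε : ℝ) (hε : 0 < ε)
    (x : ℝ) (hx : x ∈ Set.Icc (-π) π) :
    ∑' k : ℤ, Real.cos (k * x) / (1 + ε ^ 2 * (k : ℝ) ^ 2) =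
      π * Real.cosh ((|x| - π) / ε) / (ε * Real.sinh (π / ε)) := by
  haveI : Fact (0 < 2*π) := ⟨by positivity⟩
  have hS : 0 < Real.sinh (π/ε) := Real.sinh_pos_iff.mpr (by positivity)
  have main : ∀ y ∈ Set.Ico (-π) π,
      ∑' k : ℤ, Real.cos (k * y) / (1 + ε ^ 2 * (k : ℝ) ^ 2) =
        π * Real.cosh ((|y| - π) / ε) / (ε * Real.sinh (π / ε)) := by
    intro y hy
    have hend : gfun ε (-π) = gfun ε (-π + 2*π) := by
      rw [show -π + 2*π = π by ring]
      simp [gfun, abs_neg, abs_of_nonneg Real.pi_pos.le]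
    set F : C(AddCircle (2*π), ℂ) :=
      ⟨AddCircle.liftIco (2*π) (-π) (gfun ε),
        AddCircle.liftIco_continuous hend (gfun_cont ε).continuousOn⟩ with hFdef
    have hFcoe : ⇑F = AddCircle.liftIco (2*π) (-π) (gfun ε) := rfl
    have hcoeff : ∀ n : ℤ, fourierCoeff (⇑F) n =
        ((ε * Real.sinh (π/ε) / (π * (1 + ε^2*(n:ℝ)^2)) : ℝ) : ℂ) := by
      intro n
      rw [hFcoe]
      exact coeff_eq ε hε n
    have hsummable : Summable (fourierCoeff (⇑F)) := by
      apply Summable.of_norm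
      refine Summable.congr (summable_coeffs ε hε (ε * Real.sinh (π/ε) / π)) fun n => ?_
      rw [hcoeff n, Complex.norm_real, Real.norm_eq_abs,
        abs_of_nonneg (by positivity), div_div]
    have hpt := has_pointwise_sum_fourier_series_of_summable hsummable ((y : ℝ) : AddCircle (2*π))
    have hF : F ((y : ℝ) : AddCircle (2*π)) = gfun ε y := by
      rw [hFcoe]
      exact AddCircle.liftIco_coe_apply (by rw [show -π + 2*π = π by ring]; exact hy)
    rw [hF] at hpt
    have hterm : ∀ n : ℤ, fourierCoeff (⇑F) n • fourier n ((y : ℝ) : AddCircle (2*π)) =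
        ((ε * Real.sinh (π/ε) / (π * (1 + ε^2*(n:ℝ)^2)) : ℝ) : ℂ) *
          Complex.exp (((n * y : ℝ) : ℂ) * Complex.I) := by
      intro n
      rw [smul_eq_mul, hcoeff n, fourier_coe_apply]
      congr 1
      have hπ : (π : ℂ) ≠ 0 := by exact_mod_cast Real.pi_ne_zero
      congr 1
      push_cast
      rw [div_eq_iff (by intro h; apply hπ; linear_combination h/2)]
      ring
    rw [funext hterm] at hpt
    have hre := Complex.hasSum_re hpt
    simp only [Complex.mul_re, Complex.ofReal_re, Complex.ofReal_im, zero_mul, sub_zero,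
      Complex.exp_ofReal_mul_I_re, gfun] at hre
    have hmul := hre.mul_left (π / (ε * Real.sinh (π/ε)))
    have hfinal : HasSum (fun n : ℤ => Real.cos (n * y) / (1 + ε ^ 2 * (n:ℝ) ^ 2))
        (π / (ε * Real.sinh (π/ε)) * Real.cosh ((|y| - π)/ε)) := by
      refine hmul.congr_fun fun n => ?_
      field_simp
    rw [hfinal.tsum_eq]
    ring
  rcases hx.2.lt_or_eq with h | h
  · exact main x ⟨hx.1, h⟩
  · rw [h]
    have h2 := main (-π) ⟨le_rfl, by linarith [Real.pi_pos]⟩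
    simp only [mul_neg, Real.cos_neg, abs_neg] at h2
    exact h2
end
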